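/- arXiv:2602.04175 — 4 statements merged into one kernel-verified Lean document; each statement's English description precedes it below -/
import Mathlib

section
/- Let γ_w, γ_n, γ_wn > 0 with (√γ_w + √γ_n)² - 2γ_wn ≥ c_min > 0, and let 0 < S_ε < 1/2. Define μ(S) = γ_w ln S - γ_n ln(1-S) + γ_wn(1-2S). Then there exist positive constants L_min and L_max such that for all S, S̃ ∈ [S_ε, 1 - S_ε] with S ≥ S̃, L_min (S - S̃) ≤ μ(S) - μ(S̃) ≤ L_max (S - S̃). -/
open Real Set

theorem stmt_3 (γw γn γwn c_min Sε : ℝ) (hw : 0 < γw) (hn : 0 < γn) (hwn : 0 < γwn)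
    (hc : 0 < c_min) (hcond : (Real.sqrt γw + Real.sqrt γn) ^ 2 - 2 * γwn ≥ c_min)
    (hSε : 0 < Sε) (hSε' : Sε < 1 / 2)
    (μ : ℝ → ℝ)
    (hμ : ∀ S, μ S = γw * Real.log S - γn * Real.log (1 - S) + γwn * (1 - 2 * S)) :
    ∃ Lmin Lmax : ℝ, 0 < Lmin ∧ 0 < Lmax ∧
      ∀ S ∈ Icc Sε (1 - Sε), ∀ S' ∈ Icc Sε (1 - Sε), S' ≤ S →
        Lmin * (S - S') ≤ μ S - μ S' ∧ μ S - μ S' ≤ Lmax * (S - S') := by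
  set F : ℝ → ℝ := fun S => γw * Real.log S - γn * Real.log (1 - S) + γwn * (1 - 2 * S) with hF
  have hμF : μ = F := funext hμ
  set Lmax : ℝ := γw / Sε + γn / Sε with hLmax
  have hLmaxpos : 0 < Lmax := by positivity
  -- derivative of F
  have hderiv : ∀ S : ℝ, 0 < S → S < 1 →
      HasDerivAt F (γw / S + γn / (1 - S) - 2 * γwn) S := by
    intro S hS0 hS1
    have h1S : 0 < 1 - S := by linarith
    have h1 : HasDerivAt (fun x : ℝ => γw * Real.log x) (γw * S⁻¹) S :=
      (Real.hasDerivAt_log (ne_of_gt hS0)).const_mul γw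
    have h2 : HasDerivAt (fun x : ℝ => 1 - x) (-1) S := by
      simpa using (hasDerivAt_id S).const_sub 1
    have h3 : HasDerivAt (fun x : ℝ => Real.log (1 - x)) ((1 - S)⁻¹ * (-1)) S :=
      (Real.hasDerivAt_log (ne_of_gt h1S)).comp S h2
    have h4 : HasDerivAt (fun x : ℝ => γn * Real.log (1 - x)) (γn * ((1 - S)⁻¹ * (-1))) S :=
      h3.const_mul γn
    have h5 : HasDerivAt (fun x : ℝ => γwn * (1 - 2 * x)) (γwn * (-2)) S := by
      have : HasDerivAt (fun x : ℝ => 1 - 2 * x) (-2) S := by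
        simpa using ((hasDerivAt_id S).const_mul 2).const_sub 1
      simpa using this.const_mul γwn
    have := (h1.sub h4).add h5
    convert this using 1
    · exact rfl
    · exact rfl
    · rfl
    · simp only [div_eq_mul_inv]
      ring
  -- bounds on the derivative on the interval
  have hIcc : ∀ S ∈ Icc Sε (1 - Sε), 0 < S ∧ S < 1 := by
    intro S hS
    constructor
    · linarith [hS.1]
    · linarith [hS.2]
  have hlow : ∀ S ∈ Icc Sε (1 - Sε), c_min ≤ γw / S + γn / (1 - S) - 2 * γwn := by
    intro S hS
    obtain ⟨hS0, hS1⟩ := hIcc S hS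
    have h1S : 0 < 1 - S := by linarith
    set A := Real.sqrt γw
    set B := Real.sqrt γn
    have hA : A ^ 2 = γw := Real.sq_sqrt hw.le
    have hB : B ^ 2 = γn := Real.sq_sqrt hn.le
    have key : (A + B) ^ 2 ≤ γw / S + γn / (1 - S) := by
      rw [div_add_div _ _ (ne_of_gt hS0) (ne_of_gt h1S), le_div_iff₀ (by positivity)]
      nlinarith [sq_nonneg (A * (1 - S) - B * S)]
    linarith
  have hhigh : ∀ S ∈ Icc Sε (1 - Sε), γw / S + γn / (1 - S) - 2 * γwn ≤ Lmax := by
    intro S hS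
    obtain ⟨hS0, hS1⟩ := hIcc S hS
    have h1S : 0 < 1 - S := by linarith
    have e1 : γw / S ≤ γw / Sε := by gcongr; exact hS.1
    have e2 : γn / (1 - S) ≤ γn / Sε := by gcongr; linarith [hS.2]
    have : 0 ≤ 2 * γwn := by linarith
    rw [hLmax]; linarith
  -- monotone functions
  have hmono1 : MonotoneOn (fun S => F S - c_min * S) (Icc Sε (1 - Sε)) := by
    apply monotoneOn_of_deriv_nonneg (convex_Icc _ _)
    · intro S hS
      obtain ⟨hS0, hS1⟩ := hIcc S hS
      exact (((hderiv S hS0 hS1).sub ((hasDerivAt_id S).const_mul c_min)).continuousAt).continuousWithinAt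
    · intro S hS
      rw [interior_Icc] at hS
      obtain ⟨hS0, hS1⟩ := hIcc S (Ioo_subset_Icc_self hS)
      exact (((hderiv S hS0 hS1).sub (by simpa using (hasDerivAt_id S).const_mul c_min)).differentiableAt).differentiableWithinAt
    · intro S hS
      rw [interior_Icc] at hS
      obtain ⟨hS0, hS1⟩ := hIcc S (Ioo_subset_Icc_self hS)
      have hd : HasDerivAt (fun S => F S - c_min * S)
          (γw / S + γn / (1 - S) - 2 * γwn - c_min) S :=
        (hderiv S hS0 hS1).sub (by simpa using (hasDerivAt_id S).const_mul c_min)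
      rw [hd.deriv]
      linarith [hlow S (Ioo_subset_Icc_self hS)]
  have hmono2 : MonotoneOn (fun S => Lmax * S - F S) (Icc Sε (1 - Sε)) := by
    apply monotoneOn_of_deriv_nonneg (convex_Icc _ _)
    · intro S hS
      obtain ⟨hS0, hS1⟩ := hIcc S hS
      exact ((((hasDerivAt_id S).const_mul Lmax).sub (hderiv S hS0 hS1)).continuousAt).continuousWithinAt
    · intro S hS
      rw [interior_Icc] at hS
      obtain ⟨hS0, hS1⟩ := hIcc S (Ioo_subset_Icc_self hS)
      exact ((((by simpa using (hasDerivAt_id S).const_mul Lmax : HasDerivAt (fun x : ℝ => Lmax * x) Lmax S)).sub (hderiv S hS0 hS1)).differentiableAt).differentiableWithinAt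
    · intro S hS
      rw [interior_Icc] at hS
      obtain ⟨hS0, hS1⟩ := hIcc S (Ioo_subset_Icc_self hS)
      have hd : HasDerivAt (fun S => Lmax * S - F S)
          (Lmax - (γw / S + γn / (1 - S) - 2 * γwn)) S :=
        ((by simpa using (hasDerivAt_id S).const_mul Lmax : HasDerivAt (fun x : ℝ => Lmax * x) Lmax S)).sub (hderiv S hS0 hS1)
      rw [hd.deriv]
      linarith [hhigh S (Ioo_subset_Icc_self hS)]
  refine ⟨c_min, Lmax, hc, hLmaxpos, ?_⟩
  intro S hS S' hS' hle
  have h1 := hmono1 hS' hS hle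
  have h2 := hmono2 hS' hS hle
  simp only at h1 h2
  rw [hμF]
  constructor <;> nlinarith
end

section
/- Let γ_w, γ_n, γ_wn > 0 with γ_w/x + γ_n/(1-x) - 2γ_wn ≥ c_min > 0 for all x ∈ (0,1). Define F(S) = γ_w S(ln S - 1) + γ_n(1-S)(ln(1-S)-1) + γ_wn S(1-S) and μ(S) = F'(S). Then for all a, b ∈ (0,1): F(b) - F(a) + (c_min/2)(b - a)² ≤ (b - a) μ(b). -/
open Real Set

theorem stmt_4 (γw γn γwn c_min : ℝ) (hw : 0 < γw) (hn : 0 < γn) (hwn : 0 < γwn)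
    (hc : 0 < c_min)
    (hcond : ∀ x ∈ Ioo (0:ℝ) 1, γw / x + γn / (1 - x) - 2 * γwn ≥ c_min)
    (F μ : ℝ → ℝ)
    (hF : ∀ S, F S = γw * S * (Real.log S - 1) + γn * (1 - S) * (Real.log (1 - S) - 1)
      + γwn * S * (1 - S))
    (hμ : ∀ S ∈ Ioo (0:ℝ) 1, HasDerivAt F (μ S) S) :
    ∀ a ∈ Ioo (0:ℝ) 1, ∀ b ∈ Ioo (0:ℝ) 1,
      F b - F a + c_min / 2 * (b - a) ^ 2 ≤ (b - a) * μ b := by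
  -- explicit derivative of F
  have hFd : ∀ S ∈ Ioo (0:ℝ) 1,
      HasDerivAt F (γw * Real.log S - γn * Real.log (1 - S) + γwn * (1 - 2 * S)) S := by
    intro S hS
    have hS0 : S ≠ 0 := ne_of_gt hS.1
    have hS1 : (1:ℝ) - S ≠ 0 := by have := hS.2; intro h; linarith [h]
    have l1 : HasDerivAt (fun x : ℝ => Real.log x) S⁻¹ S := Real.hasDerivAt_log hS0
    have l2 : HasDerivAt (fun x : ℝ => 1 - x) (-1) S := by
      exact (hasDerivAt_id' S).const_sub 1
    have l3 : HasDerivAt (fun x : ℝ => Real.log (1 - x)) ((1 - S)⁻¹ * (-1)) S :=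
      (Real.hasDerivAt_log hS1).comp S l2
    have e1 : HasDerivAt (fun x : ℝ => γw * x) γw S := by
      simpa using (hasDerivAt_id S).const_mul γw
    have d1 : HasDerivAt (fun x : ℝ => γw * x * (Real.log x - 1))
        (γw * (Real.log S - 1) + γw * S * S⁻¹) S := e1.mul (l1.sub_const 1)
    have e2 : HasDerivAt (fun x : ℝ => γn * (1 - x)) (γn * (-1)) S := l2.const_mul γn
    have d2 : HasDerivAt (fun x : ℝ => γn * (1 - x) * (Real.log (1 - x) - 1))
        (γn * (-1) * (Real.log (1 - S) - 1) + γn * (1 - S) * ((1 - S)⁻¹ * (-1))) S :=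
      e2.mul (l3.sub_const 1)
    have e3 : HasDerivAt (fun x : ℝ => γwn * x) γwn S := by
      simpa using (hasDerivAt_id S).const_mul γwn
    have d3 : HasDerivAt (fun x : ℝ => γwn * x * (1 - x))
        (γwn * (1 - S) + γwn * S * (-1)) S := e3.mul l2
    have key := (d1.add d2).add d3
    have hFfun : F = fun x : ℝ => γw * x * (Real.log x - 1)
        + γn * (1 - x) * (Real.log (1 - x) - 1) + γwn * x * (1 - x) := funext hF
    rw [hFfun]
    refine key.congr_deriv ?_
    field_simp
    ring
  -- explicit formula for μ
  have hμeq : ∀ S ∈ Ioo (0:ℝ) 1,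
      μ S = γw * Real.log S - γn * Real.log (1 - S) + γwn * (1 - 2 * S) := by
    intro S hS
    exact (hμ S hS).unique (hFd S hS)
  -- g = μ - c_min * id is monotone on Ioo 0 1
  set g : ℝ → ℝ := fun x => μ x - c_min * x with hg
  have hgd : ∀ x ∈ Ioo (0:ℝ) 1,
      HasDerivAt g (γw / x + γn / (1 - x) - 2 * γwn - c_min) x := by
    intro x hx
    have hx0 : x ≠ 0 := ne_of_gt hx.1
    have hx1 : (1:ℝ) - x ≠ 0 := by have := hx.2; intro h; linarith [h]
    have l1 : HasDerivAt (fun y : ℝ => Real.log y) x⁻¹ x := Real.hasDerivAt_log hx0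
    have l2 : HasDerivAt (fun y : ℝ => 1 - y) (-1) x := by
      exact (hasDerivAt_id' x).const_sub 1
    have l3 : HasDerivAt (fun y : ℝ => Real.log (1 - y)) ((1 - x)⁻¹ * (-1)) x :=
      (Real.hasDerivAt_log hx1).comp x l2
    have hh : HasDerivAt (fun y : ℝ => γw * Real.log y - γn * Real.log (1 - y)
        + γwn * (1 - 2 * y) - c_min * y)
        (γw * x⁻¹ - γn * ((1 - x)⁻¹ * (-1)) + γwn * (-2) - c_min) x := by
      have t1 := l1.const_mul γw
      have t2 := l3.const_mul γn
      have t3 : HasDerivAt (fun y : ℝ => γwn * (1 - 2 * y)) (γwn * (-2)) x := by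
        have : HasDerivAt (fun y : ℝ => 1 - 2 * y) (-2) x := by
          refine ((hasDerivAt_id' x).const_mul 2).const_sub 1 |>.congr_deriv ?_; ring
        exact this.const_mul γwn
      have t4 : HasDerivAt (fun y : ℝ => c_min * y) c_min x := by
        simpa using (hasDerivAt_id x).const_mul c_min
      exact ((t1.sub t2).add t3).sub t4
    have heq : g =ᶠ[nhds x] (fun y : ℝ => γw * Real.log y - γn * Real.log (1 - y)
        + γwn * (1 - 2 * y) - c_min * y) := by
      filter_upwards [isOpen_Ioo.mem_nhds hx] with y hy
      simp only [hg]
      rw [hμeq y hy]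
    have := hh.congr_of_eventuallyEq heq
    refine this.congr_deriv ?_
    field_simp
    ring
  have hmono : MonotoneOn g (Ioo (0:ℝ) 1) := by
    apply monotoneOn_of_hasDerivWithinAt_nonneg (convex_Ioo 0 1)
      (f' := fun x => γw / x + γn / (1 - x) - 2 * γwn - c_min)
    · intro x hx
      exact (hgd x hx).continuousAt.continuousWithinAt
    · intro x hx
      rw [interior_Ioo] at hx
      exact (hgd x hx).hasDerivWithinAt
    · intro x hx
      rw [interior_Ioo] at hx
      have := hcond x hx
      linarith
  -- G = F - c_min/2 * x^2 and its derivative g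
  set G : ℝ → ℝ := fun x => F x - c_min / 2 * x ^ 2 with hG
  have hGd : ∀ x ∈ Ioo (0:ℝ) 1, HasDerivAt G (g x) x := by
    intro x hx
    have t : HasDerivAt (fun y : ℝ => c_min / 2 * y ^ 2) (c_min * x) x := by
      have := (hasDerivAt_pow 2 x).const_mul (c_min / 2)
      refine this.congr_deriv ?_
      ring
    exact (hμ x hx).sub t
  intro a ha b hb
  rcases lt_trichotomy a b with hab | hab | hab
  · -- a < b
    have hsub : Icc a b ⊆ Ioo (0:ℝ) 1 := fun x hx =>
      ⟨lt_of_lt_of_le ha.1 hx.1, lt_of_le_of_lt hx.2 hb.2⟩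
    obtain ⟨ξ, hξ, hslope⟩ := exists_hasDerivAt_eq_slope G g hab
      (fun x hx => (hGd x (hsub hx)).continuousAt.continuousWithinAt)
      (fun x hx => hGd x (hsub ⟨le_of_lt hx.1, le_of_lt hx.2⟩))
    have hξm : ξ ∈ Ioo (0:ℝ) 1 := hsub ⟨le_of_lt hξ.1, le_of_lt hξ.2⟩
    have hne : b - a ≠ 0 := sub_ne_zero.mpr hab.ne'
    have hGe : G b - G a = (b - a) * g ξ := by
      rw [hslope]; field_simp
    have hgle : g ξ ≤ g b := hmono hξm hb (le_of_lt hξ.2)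
    have hba : (0:ℝ) ≤ b - a := by linarith
    have hmul : (b - a) * g ξ ≤ (b - a) * g b := mul_le_mul_of_nonneg_left hgle hba
    have : G b - G a ≤ (b - a) * (μ b - c_min * b) := by
      rw [hGe]; simpa [hg] using hmul
    simp only [hG] at this
    nlinarith [this]
  · subst hab; simp
  · -- b < a
    have hsub : Icc b a ⊆ Ioo (0:ℝ) 1 := fun x hx =>
      ⟨lt_of_lt_of_le hb.1 hx.1, lt_of_le_of_lt hx.2 ha.2⟩
    obtain ⟨ξ, hξ, hslope⟩ := exists_hasDerivAt_eq_slope G g hab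
      (fun x hx => (hGd x (hsub hx)).continuousAt.continuousWithinAt)
      (fun x hx => hGd x (hsub ⟨le_of_lt hx.1, le_of_lt hx.2⟩))
    have hξm : ξ ∈ Ioo (0:ℝ) 1 := hsub ⟨le_of_lt hξ.1, le_of_lt hξ.2⟩
    have hne : a - b ≠ 0 := sub_ne_zero.mpr hab.ne'
    have hGe : G a - G b = (a - b) * g ξ := by
      rw [hslope]; field_simp
    have hgle : g b ≤ g ξ := hmono hb hξm (le_of_lt hξ.1)
    have hba : (0:ℝ) ≤ a - b := by linarith
    have hmul : (a - b) * g b ≤ (a - b) * g ξ := mul_le_mul_of_nonneg_left hgle hba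
    have : (a - b) * (μ b - c_min * b) ≤ G a - G b := by
      rw [hGe]; simpa [hg] using hmul
    simp only [hG] at this
    nlinarith [this]
end

section
/- Let γ_w, γ_n, γ_wn > 0 with (√γ_w + √γ_n)² - 2γ_wn ≥ c_min > 0. Define F and μ = F' as in the two-phase flow model, fix 0 < S_ε < 1/2, and for sequences (S^k)_{k=0}^N in [S_ε, 1-S_ε], the telescoping sum satisfies: F(S^N) - F(S^0) + (c_min/2) Σ_{k=0}^{N-1} (S^{k+1} - S^k)² ≤ Σ_{k=0}^{N-1} (S^{k+1} - S^k) μ(S^{k+1}). -/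
open Real Set Finset

theorem stmt_16 (γw γn γwn c_min Sε : ℝ) (hw : 0 < γw) (hn : 0 < γn) (hwn : 0 < γwn)
    (hc : 0 < c_min) (hcond : (Real.sqrt γw + Real.sqrt γn) ^ 2 - 2 * γwn ≥ c_min)
    (hSε : 0 < Sε) (hSε' : Sε < 1 / 2)
    (F μ : ℝ → ℝ)
    (hF : ∀ S, F S = γw * S * (Real.log S - 1) + γn * (1 - S) * (Real.log (1 - S) - 1)
      + γwn * S * (1 - S))
    (hμ : ∀ S, μ S = γw * Real.log S - γn * Real.log (1 - S) + γwn * (1 - 2 * S))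
    (N : ℕ) (S : ℕ → ℝ) (hS : ∀ k ≤ N, S k ∈ Icc Sε (1 - Sε)) :
    F (S N) - F (S 0) + c_min / 2 * ∑ k ∈ Finset.range N, (S (k + 1) - S k) ^ 2 ≤
      ∑ k ∈ Finset.range N, (S (k + 1) - S k) * μ (S (k + 1)) := by
  -- helper functions
  set H : ℝ → ℝ := fun x => F x - c_min / 2 * x ^ 2 with hH
  set H' : ℝ → ℝ := fun x => μ x - c_min * x with hH'
  set H'' : ℝ → ℝ := fun x => γw / x + γn / (1 - x) - 2 * γwn - c_min with hH''
  have hint : interior (Ioo (0:ℝ) 1) = Ioo (0:ℝ) 1 := interior_Ioo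
  -- derivatives
  have hderiv1 : ∀ x ∈ Ioo (0:ℝ) 1, HasDerivAt H (H' x) x := by
    intro x hx
    obtain ⟨hx0, hx1⟩ := hx
    have h1x : (0:ℝ) < 1 - x := by linarith
    have d1 : HasDerivAt (fun y : ℝ => γw * y * (Real.log y - 1))
        (γw * Real.log x) x := by
      have := ((Real.hasDerivAt_log (ne_of_gt hx0)).sub_const 1).const_mul γw
      have h2 := (hasDerivAt_id x).const_mul γw
      have := (h2.mul ((Real.hasDerivAt_log (ne_of_gt hx0)).sub_const 1))
      refine this.congr_deriv ?_
      simp only [id]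
      field_simp
      ring
    have dlog1x : HasDerivAt (fun y : ℝ => Real.log (1 - y)) (-(1/(1-x))) x := by
      have h0 : HasDerivAt (fun y : ℝ => 1 - y) (-1 : ℝ) x := by
        simpa using (hasDerivAt_id x).const_sub 1
      have := (Real.hasDerivAt_log (ne_of_gt h1x)).comp x h0
      refine this.congr_deriv ?_
      field_simp
    have d2 : HasDerivAt (fun y : ℝ => γn * (1 - y) * (Real.log (1 - y) - 1))
        (-(γn * Real.log (1 - x))) x := by
      have ha : HasDerivAt (fun y : ℝ => γn * (1 - y)) (-γn) x := by
        have h0 : HasDerivAt (fun y : ℝ => 1 - y) (-1 : ℝ) x := by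
          simpa using (hasDerivAt_id x).const_sub 1
        simpa using h0.const_mul γn
      have hb := dlog1x.sub_const 1
      have := ha.mul hb
      refine this.congr_deriv ?_
      field_simp
      ring
    have d3 : HasDerivAt (fun y : ℝ => γwn * y * (1 - y)) (γwn * (1 - 2*x)) x := by
      have ha : HasDerivAt (fun y : ℝ => γwn * y) γwn x := by
        simpa using (hasDerivAt_id x).const_mul γwn
      have hb : HasDerivAt (fun y : ℝ => 1 - y) (-1 : ℝ) x := by
        simpa using (hasDerivAt_id x).const_sub 1
      have := ha.mul hb
      refine this.congr_deriv ?_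
      ring
    have dsq : HasDerivAt (fun y : ℝ => c_min / 2 * y ^ 2) (c_min * x) x := by
      have := (hasDerivAt_pow 2 x).const_mul (c_min / 2)
      refine this.congr_deriv ?_
      ring
    have dF : HasDerivAt F (μ x) x := by
      have := (d1.add d2).add d3
      have hEq : F = fun y => γw * y * (Real.log y - 1) + γn * (1 - y) * (Real.log (1 - y) - 1)
          + γwn * y * (1 - y) := funext hF
      rw [hEq, hμ x]
      refine this.congr_deriv ?_
      try ring
    have := dF.sub dsq
    exact this
  have hderiv2 : ∀ x ∈ Ioo (0:ℝ) 1, HasDerivAt H' (H'' x) x := by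
    intro x hx
    obtain ⟨hx0, hx1⟩ := hx
    have h1x : (0:ℝ) < 1 - x := by linarith
    have dlog1x : HasDerivAt (fun y : ℝ => Real.log (1 - y)) (-(1/(1-x))) x := by
      have h0 : HasDerivAt (fun y : ℝ => 1 - y) (-1 : ℝ) x := by
        simpa using (hasDerivAt_id x).const_sub 1
      have := (Real.hasDerivAt_log (ne_of_gt h1x)).comp x h0
      refine this.congr_deriv ?_
      field_simp
    have d1 := (Real.hasDerivAt_log (ne_of_gt hx0)).const_mul γw
    have d2 := dlog1x.const_mul γn
    have d3 : HasDerivAt (fun y : ℝ => γwn * (1 - 2*y)) (-(2*γwn)) x := by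
      have h0 : HasDerivAt (fun y : ℝ => 1 - 2*y) (-2 : ℝ) x := by
        simpa using ((hasDerivAt_id x).const_mul (2:ℝ)).const_sub 1
      have := h0.const_mul γwn
      refine this.congr_deriv ?_
      ring
    have d4 : HasDerivAt (fun y : ℝ => c_min * y) c_min x := by
      simpa using (hasDerivAt_id x).const_mul c_min
    have dμ : HasDerivAt μ (γw / x + γn / (1-x) - 2*γwn) x := by
      have hEq : μ = fun y => γw * Real.log y - γn * Real.log (1 - y) + γwn * (1 - 2*y) :=
        funext hμ
      rw [hEq]
      have := (d1.sub d2).add d3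
      refine this.congr_deriv ?_
      field_simp
      ring
    have := dμ.sub d4
    exact this
  -- second derivative nonneg
  have hpos : ∀ x ∈ Ioo (0:ℝ) 1, 0 ≤ H'' x := by
    intro x hx
    obtain ⟨hx0, hx1⟩ := hx
    have h1x : (0:ℝ) < 1 - x := by linarith
    have ha : Real.sqrt γw ^ 2 = γw := Real.sq_sqrt hw.le
    have hb : Real.sqrt γn ^ 2 = γn := Real.sq_sqrt hn.le
    have key : (Real.sqrt γw + Real.sqrt γn) ^ 2 ≤ γw / x + γn / (1 - x) := by
      rw [div_add_div _ _ (ne_of_gt hx0) (ne_of_gt h1x), le_div_iff₀ (by positivity)]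
      nlinarith [sq_nonneg (Real.sqrt γw * (1 - x) - Real.sqrt γn * x)]
    simp only [hH'']
    linarith
  -- convexity of H on Ioo 0 1
  have hconv : ConvexOn ℝ (Ioo (0:ℝ) 1) H := by
    apply convexOn_of_hasDerivWithinAt2_nonneg (convex_Ioo 0 1)
      (f' := H') (f'' := H'')
    · exact fun x hx => ((hderiv1 x hx).continuousAt).continuousWithinAt
    · intro x hx; rw [hint] at hx ⊢; exact (hderiv1 x hx).hasDerivWithinAt
    · intro x hx; rw [hint] at hx ⊢; exact (hderiv2 x hx).hasDerivWithinAt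
    · intro x hx; rw [hint] at hx; exact hpos x hx
  -- subset
  have hsub : Icc Sε (1 - Sε) ⊆ Ioo (0:ℝ) 1 := by
    intro x hx
    obtain ⟨h1, h2⟩ := hx
    constructor <;> linarith
  -- key per-point tangent inequality
  have htan : ∀ a ∈ Ioo (0:ℝ) 1, ∀ b ∈ Ioo (0:ℝ) 1, H b + H' b * (a - b) ≤ H a := by
    intro a ha b hb
    rcases lt_trichotomy a b with h | h | h
    · have hsl := hconv.slope_le_of_hasDerivAt ha hb h (hderiv1 b hb)
      rw [slope_def_field, div_le_iff₀ (by linarith)] at hsl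
      nlinarith [hsl]
    · subst h; simp
    · have := hconv.le_slope_of_hasDerivAt hb ha h (hderiv1 b hb)
      rw [slope_def_field] at this
      have : H' b ≤ (H a - H b) / (a - b) := this
      rw [le_div_iff₀ (by linarith)] at this
      linarith
  -- per-step inequality
  have hstep : ∀ k ∈ Finset.range N,
      F (S (k+1)) - F (S k) + c_min / 2 * (S (k+1) - S k) ^ 2 ≤
        (S (k+1) - S k) * μ (S (k+1)) := by
    intro k hk
    rw [Finset.mem_range] at hk
    have ha := hsub (hS k (by omega))
    have hb := hsub (hS (k+1) (by omega))
    have := htan (S k) ha (S (k+1)) hb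
    simp only [hH, hH'] at this
    nlinarith [this]
  -- sum up
  have hsum := Finset.sum_le_sum hstep
  have htel : ∑ k ∈ Finset.range N, (F (S (k+1)) - F (S k)) = F (S N) - F (S 0) :=
    Finset.sum_range_sub (fun k => F (S k)) N
  calc F (S N) - F (S 0) + c_min / 2 * ∑ k ∈ Finset.range N, (S (k + 1) - S k) ^ 2
      = ∑ k ∈ Finset.range N,
          (F (S (k+1)) - F (S k) + c_min / 2 * (S (k+1) - S k) ^ 2) := by
        rw [Finset.sum_add_distrib, htel, Finset.mul_sum]
    _ ≤ ∑ k ∈ Finset.range N, (S (k + 1) - S k) * μ (S (k + 1)) := hsum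
end

section
/- Let γ_w, γ_n, γ_wn > 0 with γ_w/x + γ_n/(1-x) - 2γ_wn ≥ c_min > 0 on (0,1) and let 𝒮 be the inverse of μ(S) = γ_w ln S - γ_n ln(1-S) + γ_wn(1-2S). Then 𝒮 is continuously differentiable on ℝ with 0 < 𝒮'(m) = 1/μ'(𝒮(m)) ≤ 1/c_min for every m ∈ ℝ. -/
open Real Set

theorem stmt_18 (γw γn γwn c_min : ℝ) (hw : 0 < γw) (hn : 0 < γn) (hwn : 0 < γwn)
    (hc : 0 < c_min)
    (hcond : ∀ x ∈ Ioo (0:ℝ) 1, γw / x + γn / (1 - x) - 2 * γwn ≥ c_min)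
    (μ 𝒮 : ℝ → ℝ)
    (hμ : ∀ S, μ S = γw * Real.log S - γn * Real.log (1 - S) + γwn * (1 - 2 * S))
    (h𝒮 : ∀ m : ℝ, 𝒮 m ∈ Ioo (0:ℝ) 1 ∧ μ (𝒮 m) = m) :
    ContDiff ℝ 1 𝒮 ∧
    ∀ m : ℝ,
      HasDerivAt 𝒮 (1 / (γw / 𝒮 m + γn / (1 - 𝒮 m) - 2 * γwn)) m ∧
      0 < 1 / (γw / 𝒮 m + γn / (1 - 𝒮 m) - 2 * γwn) ∧
      1 / (γw / 𝒮 m + γn / (1 - 𝒮 m) - 2 * γwn) ≤ 1 / c_min := by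
  set φ : ℝ → ℝ := fun S => γw / S + γn / (1 - S) - 2 * γwn with hφdef
  -- derivative of μ on (0,1)
  have hμderiv : ∀ S ∈ Ioo (0:ℝ) 1, HasDerivAt μ (φ S) S := by
    intro S hS
    obtain ⟨hS0, hS1⟩ := hS
    have hSne : S ≠ 0 := ne_of_gt hS0
    have h1S : (1 : ℝ) - S ≠ 0 := by linarith
    have hμeq : μ = fun S => γw * Real.log S - γn * Real.log (1 - S) + γwn * (1 - 2 * S) :=
      funext hμ
    have h1 : HasDerivAt (fun x : ℝ => γw * Real.log x) (γw * S⁻¹) S :=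
      (Real.hasDerivAt_log hSne).const_mul γw
    have hsub : HasDerivAt (fun x : ℝ => 1 - x) (-1) S := by
      simpa using (hasDerivAt_id S).const_sub 1
    have h2 : HasDerivAt (fun x : ℝ => γn * Real.log (1 - x)) (γn * ((1 - S)⁻¹ * -1)) S :=
      (((Real.hasDerivAt_log h1S).comp S hsub)).const_mul γn
    have h3 : HasDerivAt (fun x : ℝ => γwn * (1 - 2 * x)) (γwn * (0 - 2)) S := by
      have : HasDerivAt (fun x : ℝ => 1 - 2 * x) (0 - 2) S := by
        simpa using ((hasDerivAt_id S).const_mul 2).const_sub (1:ℝ)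
      exact this.const_mul γwn
    have h : HasDerivAt μ (γw * S⁻¹ - γn * ((1 - S)⁻¹ * -1) + γwn * (0 - 2)) S := by
      rw [hμeq]; exact (h1.sub h2).add h3
    have heq : γw * S⁻¹ - γn * ((1 - S)⁻¹ * -1) + γwn * (0 - 2) = φ S := by
      simp only [hφdef]
      field_simp
      ring
    rwa [heq] at h
  have hφge : ∀ m : ℝ, c_min ≤ φ (𝒮 m) := fun m => hcond _ (h𝒮 m).1
  have hφpos : ∀ m : ℝ, 0 < φ (𝒮 m) := fun m => lt_of_lt_of_le hc (hφge m)
  -- μ strictly monotone on (0,1)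
  have hmono : StrictMonoOn μ (Ioo (0:ℝ) 1) := by
    apply strictMonoOn_of_deriv_pos (convex_Ioo 0 1)
    · intro x hx
      exact (hμderiv x hx).continuousAt.continuousWithinAt
    · intro x hx
      rw [interior_Ioo] at hx
      rw [(hμderiv x hx).deriv]
      have := hcond x hx
      exact lt_of_lt_of_le hc this
  -- 𝒮 strictly monotone
  have hSmono : StrictMono 𝒮 := by
    intro a b hab
    by_contra h
    push_neg at h
    have : μ (𝒮 b) ≤ μ (𝒮 a) := by
      rcases eq_or_lt_of_le h with h' | h'
      · rw [h']
      · exact le_of_lt (hmono (h𝒮 b).1 (h𝒮 a).1 h')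
    rw [(h𝒮 a).2, (h𝒮 b).2] at this
    exact absurd this (not_le.mpr hab)
  -- range of 𝒮 is Ioo 0 1
  have hrange : range 𝒮 = Ioo (0:ℝ) 1 := by
    apply Subset.antisymm
    · rintro _ ⟨m, rfl⟩; exact (h𝒮 m).1
    · intro S hS
      refine ⟨μ S, hmono.injOn (h𝒮 (μ S)).1 hS ?_⟩
      exact (h𝒮 (μ S)).2
  -- 𝒮 continuous
  have hScont : Continuous 𝒮 := by
    refine continuous_iff_continuousAt.mpr fun m => ?_
    apply (hSmono.strictMonoOn univ).continuousAt_of_image_mem_nhds Filter.univ_mem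
    rw [image_univ, hrange]
    exact isOpen_Ioo.mem_nhds (h𝒮 m).1
  -- derivative of 𝒮
  have hder : ∀ m : ℝ, HasDerivAt 𝒮 (1 / φ (𝒮 m)) m := by
    intro m
    have h := HasDerivAt.of_local_left_inverse (hScont.continuousAt)
      (hμderiv _ (h𝒮 m).1) (ne_of_gt (hφpos m))
      (Filter.Eventually.of_forall fun x => (h𝒮 x).2)
    rwa [← one_div] at h
  have hne0 : ∀ m : ℝ, 𝒮 m ≠ 0 := fun m => ne_of_gt (h𝒮 m).1.1
  have hne1 : ∀ m : ℝ, (1:ℝ) - 𝒮 m ≠ 0 := fun m => by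
    have := (h𝒮 m).1.2; intro h; linarith [sub_eq_zero.mp h]
  constructor
  · rw [contDiff_one_iff_deriv]
    constructor
    · exact fun m => (hder m).differentiableAt
    · have : deriv 𝒮 = fun m => 1 / φ (𝒮 m) := funext fun m => (hder m).deriv
      rw [this]
      apply Continuous.div continuous_const
      · exact ((continuous_const.div hScont hne0).add
          (continuous_const.div (continuous_const.sub hScont) hne1)).sub continuous_const
      · exact fun m => ne_of_gt (hφpos m)
  · intro m
    exact ⟨hder m, one_div_pos.mpr (hφpos m), one_div_le_one_div_of_le hc (hφge m)⟩
end
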